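/- Let a < b, n0, n1, n2 ∈ ℕ, set n = n0+n1+n2, and let B ∈ ℝ^{(n1+2n2)×(2n1+4n2)} be such that BT is invertible. Let A0 : [a,b] → ℝ^{n×n}, A1 : [a,b] → ℝ^{n×(n1+n2)}, A2 : [a,b] → ℝ^{n×n2} be bounded measurable. Define H0(s) = A0(s)G0(s) + A1(s)G3(s) + A20(s), where A20(s) = [0, 0, A2(s)] ∈ ℝ^{n×n} (block columns of widths n0, n1, n2); H1(s,θ) = A0(s)G1(s,θ) + A1(s)G4(s,θ); H2(s,θ) = A0(s)G2(s,θ) + A1(s)G5(s,θ). Then for every x = (x0,x1,x2) ∈ X with fundamental state x̂ = (x0, x1', x2''), and for almost every s ∈ [a,b]: A0(s)·(x0(s),x1(s),x2(s)) + A1(s)·(x1'(s),x2'(s)) + A2(s)·x2''(s) = H0(s) x̂(s) + ∫ₐˢ H1(s,θ) x̂(θ) dθ + ∫ₛᵇ H2(s,θ) x̂(θ) dθ; that is, the PDE generator applied to x equals the 3-PI operator 𝒜 = P_{H0,H1,H2} applied to the fundamental state x̂. -/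

import Mathlib

open MeasureTheory Set Matrix ENNReal

noncomputable section

/-- Boundary-full index: blocks for x1(a), x1(b), x2(a), x2(b), x2'(a), x2'(b). -/
abbrev BfI (n1 n2 : ℕ) : Type := Fin n1 ⊕ Fin n1 ⊕ Fin n2 ⊕ Fin n2 ⊕ Fin n2 ⊕ Fin n2
/-- Boundary-core index: blocks for x1(a), x2(a), x2'(a). -/
abbrev BcI (n1 n2 : ℕ) : Type := Fin n1 ⊕ Fin n2 ⊕ Fin n2
/-- State index: blocks for the (x0, x1, x2) components. -/
abbrev StI (n0 n1 n2 : ℕ) : Type := Fin n0 ⊕ Fin n1 ⊕ Fin n2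
/-- First-derivative index: blocks for (x1', x2'). -/
abbrev D1I (n1 n2 : ℕ) : Type := Fin n1 ⊕ Fin n2

/-- The matrix T with block rows [I,0,0],[I,0,0],[0,I,0],[0,I,(b-a)I],[0,0,I],[0,0,I]. -/
def Tmat (n1 n2 : ℕ) (a b : ℝ) : Matrix (BfI n1 n2) (BcI n1 n2) ℝ :=
  Matrix.of fun r c =>
    match r, c with
    | .inl i, .inl j => if i = j then 1 else 0
    | .inr (.inl i), .inl j => if i = j then 1 else 0
    | .inr (.inr (.inl i)), .inr (.inl j) => if i = j then 1 else 0
    | .inr (.inr (.inr (.inl i))), .inr (.inl j) => if i = j then 1 else 0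
    | .inr (.inr (.inr (.inl i))), .inr (.inr j) => if i = j then b - a else 0
    | .inr (.inr (.inr (.inr (.inl i)))), .inr (.inr j) => if i = j then 1 else 0
    | .inr (.inr (.inr (.inr (.inr i)))), .inr (.inr j) => if i = j then 1 else 0
    | _, _ => 0

/-- Q(θ) with block rows [0,0,0],[0,I,0],[0,0,0],[0,0,(b-θ)I],[0,0,0],[0,0,I]. -/
def Qmat (n0 n1 n2 : ℕ) (b θ : ℝ) : Matrix (BfI n1 n2) (StI n0 n1 n2) ℝ :=
  Matrix.of fun r c =>
    match r, c with
    | .inr (.inl i), .inr (.inl j) => if i = j then 1 else 0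
    | .inr (.inr (.inr (.inl i))), .inr (.inr j) => if i = j then b - θ else 0
    | .inr (.inr (.inr (.inr (.inr i)))), .inr (.inr j) => if i = j then 1 else 0
    | _, _ => 0

/-- K(s) with block rows [0,0,0],[I,0,0],[0,I,(s-a)I]. -/
def Kmat (n0 n1 n2 : ℕ) (a s : ℝ) : Matrix (StI n0 n1 n2) (BcI n1 n2) ℝ :=
  Matrix.of fun r c =>
    match r, c with
    | .inr (.inl i), .inl j => if i = j then 1 else 0
    | .inr (.inr i), .inr (.inl j) => if i = j then 1 else 0
    | .inr (.inr i), .inr (.inr j) => if i = j then s - a else 0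
    | _, _ => 0

/-- V = [[0,0,0],[0,0,I]]. -/
def Vmat (n1 n2 : ℕ) : Matrix (D1I n1 n2) (BcI n1 n2) ℝ :=
  Matrix.of fun r c =>
    match r, c with
    | .inr i, .inr (.inr j) => if i = j then 1 else 0
    | _, _ => 0

/-- G0 = [[I,0,0],[0,0,0],[0,0,0]]. -/
def G0mat (n0 n1 n2 : ℕ) : Matrix (StI n0 n1 n2) (StI n0 n1 n2) ℝ :=
  Matrix.of fun r c =>
    match r, c with
    | .inl i, .inl j => if i = j then 1 else 0
    | _, _ => 0

/-- L1(s,θ) = [[0,0,0],[0,I,0],[0,0,(s-θ)I]]. -/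
def L1mat (n0 n1 n2 : ℕ) (s θ : ℝ) : Matrix (StI n0 n1 n2) (StI n0 n1 n2) ℝ :=
  Matrix.of fun r c =>
    match r, c with
    | .inr (.inl i), .inr (.inl j) => if i = j then 1 else 0
    | .inr (.inr i), .inr (.inr j) => if i = j then s - θ else 0
    | _, _ => 0

/-- G3 = [[0,I,0],[0,0,0]]. -/
def G3mat (n0 n1 n2 : ℕ) : Matrix (D1I n1 n2) (StI n0 n1 n2) ℝ :=
  Matrix.of fun r c =>
    match r, c with
    | .inl i, .inr (.inl j) => if i = j then 1 else 0
    | _, _ => 0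

/-- L4 = [[0,0,0],[0,0,I]]. -/
def L4mat (n0 n1 n2 : ℕ) : Matrix (D1I n1 n2) (StI n0 n1 n2) ℝ :=
  Matrix.of fun r c =>
    match r, c with
    | .inr i, .inr (.inr j) => if i = j then 1 else 0
    | _, _ => 0

/-- G2(s,θ) = -K(s) (BT)⁻¹ B Q(θ). -/
def G2fun (n0 n1 n2 : ℕ) (a b : ℝ) (B : Matrix (BcI n1 n2) (BfI n1 n2) ℝ) (s θ : ℝ) :
    Matrix (StI n0 n1 n2) (StI n0 n1 n2) ℝ :=
  -(Kmat n0 n1 n2 a s * ((B * Tmat n1 n2 a b)⁻¹ * (B * Qmat n0 n1 n2 b θ)))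

/-- G1(s,θ) = L1(s,θ) + G2(s,θ). -/
def G1fun (n0 n1 n2 : ℕ) (a b : ℝ) (B : Matrix (BcI n1 n2) (BfI n1 n2) ℝ) (s θ : ℝ) :
    Matrix (StI n0 n1 n2) (StI n0 n1 n2) ℝ :=
  L1mat n0 n1 n2 s θ + G2fun n0 n1 n2 a b B s θ

/-- G5(s,θ) = -V (BT)⁻¹ B Q(θ). -/
def G5fun (n0 n1 n2 : ℕ) (a b : ℝ) (B : Matrix (BcI n1 n2) (BfI n1 n2) ℝ) (_s θ : ℝ) :
    Matrix (D1I n1 n2) (StI n0 n1 n2) ℝ :=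
  -(Vmat n1 n2 * ((B * Tmat n1 n2 a b)⁻¹ * (B * Qmat n0 n1 n2 b θ)))

/-- G4(s,θ) = L4 + G5(s,θ). -/
def G4fun (n0 n1 n2 : ℕ) (a b : ℝ) (B : Matrix (BcI n1 n2) (BfI n1 n2) ℝ) (s θ : ℝ) :
    Matrix (D1I n1 n2) (StI n0 n1 n2) ℝ :=
  L4mat n0 n1 n2 + G5fun n0 n1 n2 a b B s θ

/-- The 3-PI (partial integral) operator with multiplier M0 and kernels M1 (below
the diagonal) and M2 (above the diagonal) on the interval [a,b]. -/
def PIop {ι κ : Type*} [Fintype ι] [Fintype κ] (a b : ℝ)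
    (M0 : ℝ → Matrix κ ι ℝ) (M1 M2 : ℝ → ℝ → Matrix κ ι ℝ)
    (x : ℝ → ι → ℝ) : ℝ → κ → ℝ := fun s =>
  (M0 s).mulVec (x s) + (∫ θ in a..s, (M1 s θ).mulVec (x θ)) +
    ∫ θ in s..b, (M2 s θ).mulVec (x θ)

/-- The unitary operator 𝒯 = P_{G0,G1,G2}. -/
def Tcal (n0 n1 n2 : ℕ) (a b : ℝ) (B : Matrix (BcI n1 n2) (BfI n1 n2) ℝ)
    (x : ℝ → StI n0 n1 n2 → ℝ) : ℝ → StI n0 n1 n2 → ℝ :=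
  PIop a b (fun _ => G0mat n0 n1 n2) (G1fun n0 n1 n2 a b B) (G2fun n0 n1 n2 a b B) x

/-- The operator ℋ = P_{G3,G4,G5}. -/
def Hcal (n0 n1 n2 : ℕ) (a b : ℝ) (B : Matrix (BcI n1 n2) (BfI n1 n2) ℝ)
    (x : ℝ → StI n0 n1 n2 → ℝ) : ℝ → D1I n1 n2 → ℝ :=
  PIop a b (fun _ => G3mat n0 n1 n2) (G4fun n0 n1 n2 a b B) (G5fun n0 n1 n2 a b B) x

/-- Stacking three component functions into a single state function. -/
def stack3 {n0 n1 n2 : ℕ} (x0 : ℝ → Fin n0 → ℝ) (x1 : ℝ → Fin n1 → ℝ)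
    (x2 : ℝ → Fin n2 → ℝ) : ℝ → StI n0 n1 n2 → ℝ :=
  fun s => Sum.elim (x0 s) (Sum.elim (x1 s) (x2 s))

/-- The vector of full boundary values (x1(a), x1(b), x2(a), x2(b), x2'(a), x2'(b)). -/
def bfvec {n1 n2 : ℕ} (x1 : ℝ → Fin n1 → ℝ) (x2 x2' : ℝ → Fin n2 → ℝ) (a b : ℝ) :
    BfI n1 n2 → ℝ :=
  Sum.elim (x1 a) (Sum.elim (x1 b) (Sum.elim (x2 a) (Sum.elim (x2 b)
    (Sum.elim (x2' a) (x2' b)))))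

/-- x1 is of Sobolev class H¹ on [a,b] with derivative x1' ∈ L². -/
def IsH1 (a b : ℝ) {n : ℕ} (x1 x1' : ℝ → Fin n → ℝ) : Prop :=
  MemLp x1' 2 (volume.restrict (Icc a b)) ∧
    ∀ s ∈ Icc a b, x1 s = x1 a + ∫ η in a..s, x1' η

/-- x2 is of Sobolev class H² on [a,b] with first derivative x2' and second
derivative x2'' ∈ L². -/
def IsH2 (a b : ℝ) {n : ℕ} (x2 x2' x2'' : ℝ → Fin n → ℝ) : Prop :=
  (∀ s ∈ Icc a b, x2 s = x2 a + ∫ η in a..s, x2' η) ∧ IsH1 a b x2' x2''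

/-- Membership of (x0,x1,x2) (with derivative data x1', x2', x2'') in the space X. -/
def InX (a b : ℝ) {n0 n1 n2 : ℕ} (B : Matrix (BcI n1 n2) (BfI n1 n2) ℝ)
    (x0 : ℝ → Fin n0 → ℝ) (x1 x1' : ℝ → Fin n1 → ℝ) (x2 x2' x2'' : ℝ → Fin n2 → ℝ) : Prop :=
  MemLp x0 2 (volume.restrict (Icc a b)) ∧ IsH1 a b x1 x1' ∧ IsH2 a b x2 x2' x2'' ∧
    B.mulVec (bfvec x1 x2 x2' a b) = 0

/-- The L² inner product on [a,b]. -/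
def L2inner {n : ℕ} (a b : ℝ) (u v : ℝ → Fin n → ℝ) : ℝ :=
  ∫ s in a..b, u s ⬝ᵥ v s

/-- The L² inner product on [a,b] for state-indexed functions. -/
def L2innerSt {n0 n1 n2 : ℕ} (a b : ℝ) (u v : ℝ → StI n0 n1 n2 → ℝ) : ℝ :=
  ∫ s in a..b, u s ⬝ᵥ v s


/-- A20(s) = [0, 0, A2(s)] (block columns of widths n0, n1, n2). -/
def A20fun {n0 n1 n2 : ℕ} (A2 : ℝ → Matrix (StI n0 n1 n2) (Fin n2) ℝ) (s : ℝ) :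
    Matrix (StI n0 n1 n2) (StI n0 n1 n2) ℝ :=
  Matrix.of fun r c =>
    match c with
    | .inr (.inr j) => A2 s r j
    | _ => 0

/-- H0(s) = A0(s)G0(s) + A1(s)G3(s) + A20(s). -/
def H0fun (n0 n1 n2 : ℕ)
    (A0 : ℝ → Matrix (StI n0 n1 n2) (StI n0 n1 n2) ℝ)
    (A1 : ℝ → Matrix (StI n0 n1 n2) (D1I n1 n2) ℝ)
    (A2 : ℝ → Matrix (StI n0 n1 n2) (Fin n2) ℝ) (s : ℝ) :
    Matrix (StI n0 n1 n2) (StI n0 n1 n2) ℝ :=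
  A0 s * G0mat n0 n1 n2 + A1 s * G3mat n0 n1 n2 + A20fun A2 s

/-- H1(s,θ) = A0(s)G1(s,θ) + A1(s)G4(s,θ). -/
def H1fun (n0 n1 n2 : ℕ) (a b : ℝ) (B : Matrix (BcI n1 n2) (BfI n1 n2) ℝ)
    (A0 : ℝ → Matrix (StI n0 n1 n2) (StI n0 n1 n2) ℝ)
    (A1 : ℝ → Matrix (StI n0 n1 n2) (D1I n1 n2) ℝ) (s θ : ℝ) :
    Matrix (StI n0 n1 n2) (StI n0 n1 n2) ℝ :=
  A0 s * G1fun n0 n1 n2 a b B s θ + A1 s * G4fun n0 n1 n2 a b B s θ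

/-- H2(s,θ) = A0(s)G2(s,θ) + A1(s)G5(s,θ). -/
def H2fun (n0 n1 n2 : ℕ) (a b : ℝ) (B : Matrix (BcI n1 n2) (BfI n1 n2) ℝ)
    (A0 : ℝ → Matrix (StI n0 n1 n2) (StI n0 n1 n2) ℝ)
    (A1 : ℝ → Matrix (StI n0 n1 n2) (D1I n1 n2) ℝ) (s θ : ℝ) :
    Matrix (StI n0 n1 n2) (StI n0 n1 n2) ℝ :=
  A0 s * G2fun n0 n1 n2 a b B s θ + A1 s * G5fun n0 n1 n2 a b B s θ

/-- The operator 𝒜 = P_{H0,H1,H2}. -/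
def Acal (n0 n1 n2 : ℕ) (a b : ℝ) (B : Matrix (BcI n1 n2) (BfI n1 n2) ℝ)
    (A0 : ℝ → Matrix (StI n0 n1 n2) (StI n0 n1 n2) ℝ)
    (A1 : ℝ → Matrix (StI n0 n1 n2) (D1I n1 n2) ℝ)
    (A2 : ℝ → Matrix (StI n0 n1 n2) (Fin n2) ℝ)
    (x : ℝ → StI n0 n1 n2 → ℝ) : ℝ → StI n0 n1 n2 → ℝ :=
  PIop a b (H0fun n0 n1 n2 A0 A1 A2) (H1fun n0 n1 n2 a b B A0 A1)
    (H2fun n0 n1 n2 a b B A0 A1) x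

set_option linter.unusedSectionVars false

namespace Stmt12Aux


variable {ι κ : Type*} [Fintype ι] [Fintype κ]

/-- mulVec as a continuous linear map. -/
def mvCLM (M : Matrix κ ι ℝ) : (ι → ℝ) →L[ℝ] (κ → ℝ) :=
  LinearMap.toContinuousLinearMap M.mulVecLin

@[simp] lemma mvCLM_apply (M : Matrix κ ι ℝ) (v : ι → ℝ) : mvCLM M v = M.mulVec v := rfl

/-- Sum.elim as a continuous linear map. -/
def elimCLM : ((ι → ℝ) × (κ → ℝ)) →L[ℝ] (ι ⊕ κ → ℝ) :=
  LinearMap.toContinuousLinearMap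
    { toFun := fun p => Sum.elim p.1 p.2
      map_add' := by intro p q; funext r; cases r <;> rfl
      map_smul' := by intro c p; funext r; cases r <;> rfl }

@[simp] lemma elimCLM_apply (p : (ι → ℝ) × (κ → ℝ)) : elimCLM p = Sum.elim p.1 p.2 := rfl

variable {μ : Measure ℝ} {c d : ℝ}

lemma Integrable.sumElim {f : ℝ → ι → ℝ} {g : ℝ → κ → ℝ} (hf : Integrable f μ)
    (hg : Integrable g μ) : Integrable (fun θ => Sum.elim (f θ) (g θ)) μ := by
  simpa using (elimCLM (ι := ι) (κ := κ)).integrable_comp (hf.prodMk hg)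

lemma II.mulVec {f : ℝ → ι → ℝ} (hf : IntervalIntegrable f μ c d) (M : Matrix κ ι ℝ) :
    IntervalIntegrable (fun θ => M.mulVec (f θ)) μ c d := by
  refine ⟨?_, ?_⟩
  · exact (mvCLM M).integrable_comp hf.1
  · exact (mvCLM M).integrable_comp hf.2

lemma II.sumElim {f : ℝ → ι → ℝ} {g : ℝ → κ → ℝ} (hf : IntervalIntegrable f μ c d)
    (hg : IntervalIntegrable g μ c d) :
    IntervalIntegrable (fun θ => Sum.elim (f θ) (g θ)) μ c d :=
  ⟨Integrable.sumElim hf.1 hg.1, Integrable.sumElim hf.2 hg.2⟩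

lemma mulVec_intervalIntegral {f : ℝ → ι → ℝ} (hf : IntervalIntegrable f μ c d)
    (M : Matrix κ ι ℝ) :
    M.mulVec (∫ θ in c..d, f θ ∂μ) = ∫ θ in c..d, M.mulVec (f θ) ∂μ := by
  simpa using ((mvCLM M).intervalIntegral_comp_comm hf).symm

lemma intervalIntegral_sumElim {f : ℝ → ι → ℝ} {g : ℝ → κ → ℝ}
    (hf : IntervalIntegrable f μ c d) (hg : IntervalIntegrable g μ c d) :
    (∫ θ in c..d, Sum.elim (f θ) (g θ) ∂μ) =
      Sum.elim (∫ θ in c..d, f θ ∂μ) (∫ θ in c..d, g θ ∂μ) := by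
  have hpair : IntervalIntegrable (fun θ => (f θ, g θ)) μ c d :=
    ⟨hf.1.prodMk hg.1, hf.2.prodMk hg.2⟩
  have := (elimCLM (ι := ι) (κ := κ)).intervalIntegral_comp_comm hpair
  simp only [elimCLM_apply] at this
  have h1 : (∫ θ in c..d, (f θ, g θ) ∂μ) = (∫ θ in c..d, f θ ∂μ, ∫ θ in c..d, g θ ∂μ) := by
    refine Prod.ext ?_ ?_
    · simpa using ((ContinuousLinearMap.fst ℝ (ι → ℝ) (κ → ℝ)).intervalIntegral_comp_comm hpair).symm
    · simpa using ((ContinuousLinearMap.snd ℝ (ι → ℝ) (κ → ℝ)).intervalIntegral_comp_comm hpair).symm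
  rw [this, h1]

set_option maxHeartbeats 1000000 in
/-- Interval integrability of `(u + v·θ) • g θ`. -/
lemma II.smul_affine {g : ℝ → ι → ℝ} (hg : IntervalIntegrable g volume c d) (u v : ℝ) :
    IntervalIntegrable (fun θ => (u + v * θ) • g θ) volume c d := by
  have key : ∀ (p q : ℝ), IntegrableOn g (Ioc p q) volume →
      IntegrableOn (fun θ => (u + v * θ) • g θ) (Ioc p q) volume := by
    intro p q hgpq
    have hcont : Continuous (fun θ : ℝ => u + v * θ) :=
      continuous_const.add (continuous_const.mul continuous_id)
    refine Integrable.smul_of_top_right (𝕜 := ℝ) (β := ι → ℝ) hgpq (memLp_top_of_bound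
      hcont.aestronglyMeasurable (|u| + |v| * max |p| |q|) ?_)
    filter_upwards [ae_restrict_mem measurableSet_Ioc] with θ hθ
    have h1 : |θ| ≤ max |p| |q| := by
      rw [abs_le]
      constructor
      · have := hθ.1.le
        have : -|p| ≤ θ := by
          have := neg_abs_le p
          linarith
        exact le_trans (by simp) this
      · exact le_trans (le_trans hθ.2 (le_abs_self q)) (le_max_right _ _)
    have : |u + v * θ| ≤ |u| + |v| * |θ| := by
      calc |u + v * θ| ≤ |u| + |v * θ| := abs_add_le _ _
        _ = |u| + |v| * |θ| := by rw [abs_mul]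
    refine le_trans ?_ (by nlinarith [abs_nonneg v] : |u| + |v| * |θ| ≤ |u| + |v| * max |p| |q|)
    simpa using this
  exact ⟨key c d hg.1, key d c hg.2⟩



/-- Triangle Fubini: `∫_a^s ∫_a^η g = ∫_a^s (s-θ) • g θ dθ`. -/
lemma triangle_fubini {E : Type*} [NormedAddCommGroup E] [NormedSpace ℝ E] [CompleteSpace E]
    {a s : ℝ} (has : a ≤ s) {g : ℝ → E} (hg : IntegrableOn g (Ioc a s) volume) :
    (∫ η in a..s, ∫ θ in a..η, g θ) = ∫ θ in a..s, (s - θ) • g θ := by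
  set μ := volume.restrict (Ioc a s) with hμ
  haveI : IsFiniteMeasure μ := by
    constructor
    rw [hμ, Measure.restrict_apply_univ]
    exact measure_Ioc_lt_top
  set F : ℝ × ℝ → E := fun p => if p.2 ≤ p.1 then g p.2 else 0 with hF
  have hFind : F = Set.indicator {p : ℝ × ℝ | p.2 ≤ p.1} (fun p => g p.2) := by
    funext p
    rw [Set.indicator_apply]
    rfl
  have hgsnd : Integrable (fun p : ℝ × ℝ => g p.2) (μ.prod μ) := by
    have := (integrable_const (1 : ℝ) (μ := μ)).smul_prod hg
    simpa using this
  have hFint : Integrable F (μ.prod μ) := by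
    rw [hFind]
    exact hgsnd.indicator (measurableSet_le measurable_snd measurable_fst)
  have lhs1 : (∫ η in a..s, ∫ θ in a..η, g θ) = ∫ η, (∫ θ, F (η, θ) ∂μ) ∂μ := by
    rw [intervalIntegral.integral_of_le has]
    refine integral_congr_ae ?_
    filter_upwards [ae_restrict_mem measurableSet_Ioc] with η hη
    have hIic : ∫ θ, F (η, θ) ∂μ = ∫ θ, (Iic η).indicator g θ ∂μ := by
      refine integral_congr_ae (Filter.Eventually.of_forall fun θ => ?_)
      simp only [hF, Set.indicator_apply, mem_Iic]
    rw [hIic, integral_indicator measurableSet_Iic, hμ, Measure.restrict_restrict measurableSet_Iic]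
    have hset : Iic η ∩ Ioc a s = Ioc a η := by
      ext θ
      simp only [mem_inter_iff, mem_Iic, mem_Ioc]
      constructor
      · rintro ⟨h1, h2, _⟩; exact ⟨h2, h1⟩
      · rintro ⟨h1, h2⟩; exact ⟨h2, h1, h2.trans hη.2⟩
    rw [hset, intervalIntegral.integral_of_le hη.1.le]
  have swap : (∫ η, (∫ θ, F (η, θ) ∂μ) ∂μ) = ∫ θ, (∫ η, F (η, θ) ∂μ) ∂μ :=
    integral_integral_swap hFint
  have rhs1 : (∫ θ, (∫ η, F (η, θ) ∂μ) ∂μ) = ∫ θ in a..s, (s - θ) • g θ := by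
    rw [intervalIntegral.integral_of_le has]
    refine integral_congr_ae ?_
    filter_upwards [ae_restrict_mem measurableSet_Ioc] with θ hθ
    have h1 : ∫ η, F (η, θ) ∂μ = ∫ η, (Ici θ).indicator (fun _ => g θ) η ∂μ := by
      refine integral_congr_ae (Filter.Eventually.of_forall fun η => ?_)
      simp only [hF, Set.indicator_apply, mem_Ici]
    have hset : Ici θ ∩ Ioc a s = Icc θ s := by
      ext η
      simp only [mem_inter_iff, mem_Ici, mem_Ioc, mem_Icc]
      constructor
      · rintro ⟨h1', h2', h3'⟩; exact ⟨h1', h3'⟩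
      · rintro ⟨h1', h2'⟩; exact ⟨h1', hθ.1.trans_le h1', h2'⟩
    rw [h1, integral_indicator measurableSet_Ici, setIntegral_const, hμ,
      measureReal_restrict_apply measurableSet_Ici, hset, Real.volume_real_Icc_of_le hθ.2]
  rw [lhs1, swap, rhs1]


lemma ii_of_mem {E : Type*} [NormedAddCommGroup E] {f : ℝ → E} {a b c d : ℝ}
    (hf : IntegrableOn f (Icc a b) volume) (hc : c ∈ Icc a b) (hd : d ∈ Icc a b) :
    IntervalIntegrable f volume c d :=
  (hf.mono_set (uIcc_subset_Icc hc hd)).intervalIntegrable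

lemma II.smul_sub {ι : Type*} [Fintype ι] {g : ℝ → ι → ℝ} {c d : ℝ}
    (hg : IntervalIntegrable g volume c d) (u : ℝ) :
    IntervalIntegrable (fun θ => (u - θ) • g θ) volume c d := by
  have h := II.smul_affine hg u (-1)
  have e : (fun θ : ℝ => (u + (-1) * θ) • g θ) = fun θ => (u - θ) • g θ := by
    funext θ; congr 1; ring
  rwa [e] at h


variable {n0 n1 n2 : ℕ}

lemma Qmat_mulVec (b θ : ℝ) (u0 : Fin n0 → ℝ) (u1 : Fin n1 → ℝ) (u2 : Fin n2 → ℝ) :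
    (Qmat n0 n1 n2 b θ).mulVec (Sum.elim u0 (Sum.elim u1 u2)) =
      Sum.elim (0 : Fin n1 → ℝ) (Sum.elim u1 (Sum.elim (0 : Fin n2 → ℝ)
        (Sum.elim ((b - θ) • u2) (Sum.elim (0 : Fin n2 → ℝ) u2)))) := by
  funext r
  obtain (i | i | i | i | i | i) := r <;>
    simp [Qmat, Matrix.mulVec, dotProduct, Fintype.sum_sum_type, ite_mul,
      one_mul, zero_mul, Finset.sum_ite_eq, smul_eq_mul]

lemma Tmat_mulVec (a b : ℝ) (w1 : Fin n1 → ℝ) (w2 w3 : Fin n2 → ℝ) :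
    (Tmat n1 n2 a b).mulVec (Sum.elim w1 (Sum.elim w2 w3)) =
      Sum.elim w1 (Sum.elim w1 (Sum.elim w2 (Sum.elim (w2 + (b - a) • w3)
        (Sum.elim w3 w3)))) := by
  funext r
  obtain (i | i | i | i | i | i) := r <;>
    simp [Tmat, Matrix.mulVec, dotProduct, Fintype.sum_sum_type, ite_mul,
      one_mul, zero_mul, Finset.sum_ite_eq, smul_eq_mul]

lemma Kmat_mulVec (a s : ℝ) (w1 : Fin n1 → ℝ) (w2 w3 : Fin n2 → ℝ) :
    (Kmat n0 n1 n2 a s).mulVec (Sum.elim w1 (Sum.elim w2 w3)) =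
      Sum.elim (0 : Fin n0 → ℝ) (Sum.elim w1 (w2 + (s - a) • w3)) := by
  funext r
  obtain (i | i | i) := r <;>
    simp [Kmat, Matrix.mulVec, dotProduct, Fintype.sum_sum_type, ite_mul,
      one_mul, zero_mul, Finset.sum_ite_eq, smul_eq_mul]

lemma Vmat_mulVec (w1 : Fin n1 → ℝ) (w2 w3 : Fin n2 → ℝ) :
    (Vmat n1 n2).mulVec (Sum.elim w1 (Sum.elim w2 w3)) =
      Sum.elim (0 : Fin n1 → ℝ) w3 := by
  funext r
  obtain (i | i) := r <;>
    simp [Vmat, Matrix.mulVec, dotProduct, Fintype.sum_sum_type, ite_mul,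
      one_mul, zero_mul, Finset.sum_ite_eq]

lemma G0mat_mulVec (u0 : Fin n0 → ℝ) (u1 : Fin n1 → ℝ) (u2 : Fin n2 → ℝ) :
    (G0mat n0 n1 n2).mulVec (Sum.elim u0 (Sum.elim u1 u2)) =
      Sum.elim u0 (Sum.elim (0 : Fin n1 → ℝ) (0 : Fin n2 → ℝ)) := by
  funext r
  obtain (i | i | i) := r <;>
    simp [G0mat, Matrix.mulVec, dotProduct, Fintype.sum_sum_type, ite_mul,
      one_mul, zero_mul, Finset.sum_ite_eq]

lemma L1mat_mulVec (s θ : ℝ) (u0 : Fin n0 → ℝ) (u1 : Fin n1 → ℝ) (u2 : Fin n2 → ℝ) :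
    (L1mat n0 n1 n2 s θ).mulVec (Sum.elim u0 (Sum.elim u1 u2)) =
      Sum.elim (0 : Fin n0 → ℝ) (Sum.elim u1 ((s - θ) • u2)) := by
  funext r
  obtain (i | i | i) := r <;>
    simp [L1mat, Matrix.mulVec, dotProduct, Fintype.sum_sum_type, ite_mul,
      one_mul, zero_mul, Finset.sum_ite_eq, smul_eq_mul]

lemma G3mat_mulVec (u0 : Fin n0 → ℝ) (u1 : Fin n1 → ℝ) (u2 : Fin n2 → ℝ) :
    (G3mat n0 n1 n2).mulVec (Sum.elim u0 (Sum.elim u1 u2)) =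
      Sum.elim u1 (0 : Fin n2 → ℝ) := by
  funext r
  obtain (i | i) := r <;>
    simp [G3mat, Matrix.mulVec, dotProduct, Fintype.sum_sum_type, ite_mul,
      one_mul, zero_mul, Finset.sum_ite_eq]

lemma L4mat_mulVec (u0 : Fin n0 → ℝ) (u1 : Fin n1 → ℝ) (u2 : Fin n2 → ℝ) :
    (L4mat n0 n1 n2).mulVec (Sum.elim u0 (Sum.elim u1 u2)) =
      Sum.elim (0 : Fin n1 → ℝ) u2 := by
  funext r
  obtain (i | i) := r <;>
    simp [L4mat, Matrix.mulVec, dotProduct, Fintype.sum_sum_type, ite_mul,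
      one_mul, zero_mul, Finset.sum_ite_eq]

lemma A20fun_mulVec (A2 : ℝ → Matrix (StI n0 n1 n2) (Fin n2) ℝ) (s : ℝ)
    (u0 : Fin n0 → ℝ) (u1 : Fin n1 → ℝ) (u2 : Fin n2 → ℝ) :
    (A20fun A2 s).mulVec (Sum.elim u0 (Sum.elim u1 u2)) = (A2 s).mulVec u2 := by
  funext r
  simp [A20fun, Matrix.mulVec, dotProduct, Fintype.sum_sum_type]

lemma sumElim_add (u u' : ι → ℝ) (v v' : κ → ℝ) [Fintype ι] [Fintype κ] :
    Sum.elim u v + Sum.elim u' v' = Sum.elim (u + u') (v + v') := by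
  funext r; cases r <;> rfl


end Stmt12Aux

open Stmt12Aux in
/-- for x ∈ X with fundamental state x̂, the PDE generator
A0 x + A1 (x1',x2') + A2 x2'' applied to x coincides with the 3-PI operator
𝒜 = P_{H0,H1,H2} applied to the fundamental state x̂. -/
theorem stmt12 (a b : ℝ) (hab : a < b) (n0 n1 n2 : ℕ)
    (B : Matrix (BcI n1 n2) (BfI n1 n2) ℝ)
    (hBT : IsUnit (B * Tmat n1 n2 a b))
    (A0 : ℝ → Matrix (StI n0 n1 n2) (StI n0 n1 n2) ℝ)
    (A1 : ℝ → Matrix (StI n0 n1 n2) (D1I n1 n2) ℝ)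
    (A2 : ℝ → Matrix (StI n0 n1 n2) (Fin n2) ℝ)
    (hA0m : ∀ i j, Measurable fun s => A0 s i j)
    (hA1m : ∀ i j, Measurable fun s => A1 s i j)
    (hA2m : ∀ i j, Measurable fun s => A2 s i j)
    (M : ℝ)
    (hA0b : ∀ s ∈ Icc a b, ∀ i j, |A0 s i j| ≤ M)
    (hA1b : ∀ s ∈ Icc a b, ∀ i j, |A1 s i j| ≤ M)
    (hA2b : ∀ s ∈ Icc a b, ∀ i j, |A2 s i j| ≤ M)
    (x0 : ℝ → Fin n0 → ℝ) (x1 x1' : ℝ → Fin n1 → ℝ) (x2 x2' x2'' : ℝ → Fin n2 → ℝ)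
    (hX : InX a b B x0 x1 x1' x2 x2' x2'') :
    ∀ᵐ s ∂(volume.restrict (Icc a b)),
      (A0 s).mulVec (stack3 x0 x1 x2 s) + (A1 s).mulVec (Sum.elim (x1' s) (x2' s)) +
          (A2 s).mulVec (x2'' s) =
        Acal n0 n1 n2 a b B A0 A1 A2 (stack3 x0 x1' x2'') s := by
  classical
  obtain ⟨hx0L2, ⟨hx1L2, hx1rep⟩, ⟨hx2rep, hx2L2, hx2prep⟩, hBbc⟩ := hX
  haveI : IsFiniteMeasure (volume.restrict (Icc a b)) :=
    ⟨by rw [Measure.restrict_apply_univ]; exact measure_Icc_lt_top⟩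
  have hInt0 : IntegrableOn x0 (Icc a b) volume := hx0L2.integrable one_le_two
  have hInt1 : IntegrableOn x1' (Icc a b) volume := hx1L2.integrable one_le_two
  have hInt2 : IntegrableOn x2'' (Icc a b) volume := hx2L2.integrable one_le_two
  have haM : a ∈ Icc a b := left_mem_Icc.mpr hab.le
  have hbM : b ∈ Icc a b := right_mem_Icc.mpr hab.le
  -- basic integral identities
  have hIx1 : ∀ s ∈ Icc a b, (∫ θ in a..s, x1' θ) = x1 s - x1 a := by
    intro s hs; rw [hx1rep s hs]; abel
  have hIx2' : ∀ s ∈ Icc a b, (∫ θ in a..s, x2'' θ) = x2' s - x2' a := by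
    intro s hs; rw [hx2prep s hs]; abel
  have hIx2 : ∀ s ∈ Icc a b, (∫ θ in a..s, (s - θ) • x2'' θ)
      = x2 s - x2 a - (s - a) • x2' a := by
    intro s hs
    have has : a ≤ s := hs.1
    have hsub : Icc a s ⊆ Icc a b := Icc_subset_Icc le_rfl hs.2
    have hIocsub : Ioc a s ⊆ Icc a b := fun θ hθ => ⟨hθ.1.le, hθ.2.trans hs.2⟩
    have hIntprim : IntervalIntegrable (fun η => ∫ θ in a..η, x2'' θ) volume a s :=
      (intervalIntegral.continuousOn_primitive_interval
        (hInt2.mono_set (uIcc_subset_Icc haM hs))).intervalIntegrable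
    have hstep : (∫ η in a..s, x2' η)
        = (s - a) • x2' a + ∫ η in a..s, ∫ θ in a..η, x2'' θ := by
      rw [intervalIntegral.integral_congr
        (g := fun η => x2' a + ∫ θ in a..η, x2'' θ) ?_]
      · rw [intervalIntegral.integral_add intervalIntegrable_const hIntprim,
          intervalIntegral.integral_const]
      · intro η hη
        rw [uIcc_of_le has] at hη
        exact hx2prep η (hsub hη)
    have htri := triangle_fubini has (hInt2.mono_set hIocsub) (g := x2'')
    rw [hx2rep s hs, hstep, htri]; abel
  -- the function q and its integral
  set q : ℝ → BfI n1 n2 → ℝ :=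
    fun θ => (Qmat n0 n1 n2 b θ).mulVec (stack3 x0 x1' x2'' θ) with hq
  have hq_eq : q = fun θ => Sum.elim (0 : Fin n1 → ℝ) (Sum.elim (x1' θ)
      (Sum.elim (0 : Fin n2 → ℝ) (Sum.elim ((b - θ) • x2'' θ)
        (Sum.elim (0 : Fin n2 → ℝ) (x2'' θ))))) := by
    rw [hq]; funext θ; exact Qmat_mulVec b θ (x0 θ) (x1' θ) (x2'' θ)
  have hIIq : ∀ c ∈ Icc a b, ∀ d ∈ Icc a b, IntervalIntegrable q volume c d := by
    intro c hc d hd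
    rw [hq_eq]
    exact II.sumElim intervalIntegrable_const (II.sumElim (ii_of_mem hInt1 hc hd)
      (II.sumElim intervalIntegrable_const (II.sumElim (II.smul_sub (ii_of_mem hInt2 hc hd) b)
        (II.sumElim intervalIntegrable_const (ii_of_mem hInt2 hc hd)))))
  have i1ab := ii_of_mem hInt1 haM hbM
  have i2ab := ii_of_mem hInt2 haM hbM
  have i2bab := II.smul_sub i2ab b
  set Iq : BfI n1 n2 → ℝ := ∫ θ in a..b, q θ with hIqdef
  have hIq : Iq = Sum.elim (0 : Fin n1 → ℝ) (Sum.elim (x1 b - x1 a)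
      (Sum.elim (0 : Fin n2 → ℝ) (Sum.elim (x2 b - x2 a - (b - a) • x2' a)
        (Sum.elim (0 : Fin n2 → ℝ) (x2' b - x2' a))))) := by
    rw [hIqdef]
    simp only [hq_eq]
    rw [intervalIntegral_sumElim intervalIntegrable_const (II.sumElim i1ab
        (II.sumElim intervalIntegrable_const (II.sumElim i2bab
          (II.sumElim intervalIntegrable_const i2ab)))),
      intervalIntegral_sumElim i1ab (II.sumElim intervalIntegrable_const
        (II.sumElim i2bab (II.sumElim intervalIntegrable_const i2ab))),
      intervalIntegral_sumElim intervalIntegrable_const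
        (II.sumElim i2bab (II.sumElim intervalIntegrable_const i2ab)),
      intervalIntegral_sumElim i2bab (II.sumElim intervalIntegrable_const i2ab),
      intervalIntegral_sumElim intervalIntegrable_const i2ab]
    simp [hIx1 b hbM, hIx2' b hbM, hIx2 b hbM]
  -- boundary values
  set xbc : BcI n1 n2 → ℝ := Sum.elim (x1 a) (Sum.elim (x2 a) (x2' a)) with hxbcdef
  have hbf : bfvec x1 x2 x2' a b = (Tmat n1 n2 a b).mulVec xbc + Iq := by
    rw [hxbcdef, Tmat_mulVec, hIq]
    funext r
    obtain (i | i | i | i | i | i) := r <;> simp [bfvec] <;> ring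
  have hdet : IsUnit (B * Tmat n1 n2 a b).det := (Matrix.isUnit_iff_isUnit_det _).mp hBT
  have hxbc : xbc = -((B * Tmat n1 n2 a b)⁻¹.mulVec (B.mulVec Iq)) := by
    have h0 : (B * Tmat n1 n2 a b).mulVec xbc + B.mulVec Iq = 0 := by
      rw [← Matrix.mulVec_mulVec, ← Matrix.mulVec_add, ← hbf]
      exact hBbc
    have h1 : (B * Tmat n1 n2 a b).mulVec xbc = -(B.mulVec Iq) :=
      eq_neg_of_add_eq_zero_left h0
    calc xbc = ((B * Tmat n1 n2 a b)⁻¹ * (B * Tmat n1 n2 a b)).mulVec xbc := by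
          rw [Matrix.nonsing_inv_mul _ hdet, Matrix.one_mulVec]
      _ = (B * Tmat n1 n2 a b)⁻¹.mulVec ((B * Tmat n1 n2 a b).mulVec xbc) :=
          (Matrix.mulVec_mulVec _ _ _).symm
      _ = -((B * Tmat n1 n2 a b)⁻¹.mulVec (B.mulVec Iq)) := by
          rw [h1, Matrix.mulVec_neg]
  have htail : ∀ {ρ : Type} [Fintype ρ] (W : Matrix ρ (BcI n1 n2) ℝ),
      -((W * ((B * Tmat n1 n2 a b)⁻¹ * B)).mulVec Iq) = W.mulVec xbc := by
    intro ρ _ W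
    rw [hxbc, ← Matrix.mulVec_mulVec, ← Matrix.mulVec_mulVec, Matrix.mulVec_neg]
  -- pointwise kernel expansions
  have hG2eq : ∀ (s' θ : ℝ), (G2fun n0 n1 n2 a b B s' θ).mulVec (stack3 x0 x1' x2'' θ) =
      -((Kmat n0 n1 n2 a s' * ((B * Tmat n1 n2 a b)⁻¹ * B)).mulVec (q θ)) := by
    intro s' θ
    have hassoc : Kmat n0 n1 n2 a s' * ((B * Tmat n1 n2 a b)⁻¹ * (B * Qmat n0 n1 n2 b θ)) =
        (Kmat n0 n1 n2 a s' * ((B * Tmat n1 n2 a b)⁻¹ * B)) * Qmat n0 n1 n2 b θ := by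
      rw [← Matrix.mul_assoc ((B * Tmat n1 n2 a b)⁻¹) B, ← Matrix.mul_assoc]
    simp only [G2fun, hq]
    rw [Matrix.neg_mulVec, hassoc, ← Matrix.mulVec_mulVec]
  have hG5eq : ∀ (s' θ : ℝ), (G5fun n0 n1 n2 a b B s' θ).mulVec (stack3 x0 x1' x2'' θ) =
      -((Vmat n1 n2 * ((B * Tmat n1 n2 a b)⁻¹ * B)).mulVec (q θ)) := by
    intro s' θ
    have hassoc : Vmat n1 n2 * ((B * Tmat n1 n2 a b)⁻¹ * (B * Qmat n0 n1 n2 b θ)) =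
        (Vmat n1 n2 * ((B * Tmat n1 n2 a b)⁻¹ * B)) * Qmat n0 n1 n2 b θ := by
      rw [← Matrix.mul_assoc ((B * Tmat n1 n2 a b)⁻¹) B, ← Matrix.mul_assoc]
    simp only [G5fun, hq]
    rw [Matrix.neg_mulVec, hassoc, ← Matrix.mulVec_mulVec]
  -- now the a.e. statement
  filter_upwards [ae_restrict_mem measurableSet_Icc] with s hs
  have has : a ≤ s := hs.1
  have hsb : s ≤ b := hs.2
  have i1s := ii_of_mem hInt1 haM hs
  have i2s := ii_of_mem hInt2 haM hs
  have i2ss := II.smul_sub i2s s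
  -- interval integrability of the kernel integrands
  have iiG2 : ∀ c ∈ Icc a b, ∀ d ∈ Icc a b, IntervalIntegrable
      (fun θ => (G2fun n0 n1 n2 a b B s θ).mulVec (stack3 x0 x1' x2'' θ)) volume c d := by
    intro c hc d hd
    simp only [hG2eq]
    exact (II.mulVec (hIIq c hc d hd) _).neg
  have iiG5 : ∀ c ∈ Icc a b, ∀ d ∈ Icc a b, IntervalIntegrable
      (fun θ => (G5fun n0 n1 n2 a b B s θ).mulVec (stack3 x0 x1' x2'' θ)) volume c d := by
    intro c hc d hd
    simp only [hG5eq]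
    exact (II.mulVec (hIIq c hc d hd) _).neg
  have hL1eq : ∀ θ : ℝ, (L1mat n0 n1 n2 s θ).mulVec (stack3 x0 x1' x2'' θ) =
      Sum.elim (0 : Fin n0 → ℝ) (Sum.elim (x1' θ) ((s - θ) • x2'' θ)) :=
    fun θ => L1mat_mulVec s θ (x0 θ) (x1' θ) (x2'' θ)
  have iiL1 : IntervalIntegrable
      (fun θ => (L1mat n0 n1 n2 s θ).mulVec (stack3 x0 x1' x2'' θ)) volume a s := by
    simp only [hL1eq]
    exact II.sumElim intervalIntegrable_const (II.sumElim i1s i2ss)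
  have hL4eq : ∀ θ : ℝ, (L4mat n0 n1 n2).mulVec (stack3 x0 x1' x2'' θ) =
      Sum.elim (0 : Fin n1 → ℝ) (x2'' θ) :=
    fun θ => L4mat_mulVec (x0 θ) (x1' θ) (x2'' θ)
  have iiL4 : IntervalIntegrable
      (fun θ => (L4mat n0 n1 n2).mulVec (stack3 x0 x1' x2'' θ)) volume a s := by
    simp only [hL4eq]
    exact II.sumElim intervalIntegrable_const i2s
  have hG1eq : ∀ θ : ℝ, (G1fun n0 n1 n2 a b B s θ).mulVec (stack3 x0 x1' x2'' θ) =
      (L1mat n0 n1 n2 s θ).mulVec (stack3 x0 x1' x2'' θ) +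
        (G2fun n0 n1 n2 a b B s θ).mulVec (stack3 x0 x1' x2'' θ) := by
    intro θ; simp only [G1fun, Matrix.add_mulVec]
  have hG4eq : ∀ θ : ℝ, (G4fun n0 n1 n2 a b B s θ).mulVec (stack3 x0 x1' x2'' θ) =
      (L4mat n0 n1 n2).mulVec (stack3 x0 x1' x2'' θ) +
        (G5fun n0 n1 n2 a b B s θ).mulVec (stack3 x0 x1' x2'' θ) := by
    intro θ; simp only [G4fun, Matrix.add_mulVec]
  have iiG1 : IntervalIntegrable
      (fun θ => (G1fun n0 n1 n2 a b B s θ).mulVec (stack3 x0 x1' x2'' θ)) volume a s := by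
    simp only [hG1eq]
    exact iiL1.add (iiG2 a haM s hs)
  have iiG4 : IntervalIntegrable
      (fun θ => (G4fun n0 n1 n2 a b B s θ).mulVec (stack3 x0 x1' x2'' θ)) volume a s := by
    simp only [hG4eq]
    exact iiL4.add (iiG5 a haM s hs)
  -- the combined G2 / G5 integrals
  have hG2sum : (∫ θ in a..s, (G2fun n0 n1 n2 a b B s θ).mulVec (stack3 x0 x1' x2'' θ)) +
      (∫ θ in s..b, (G2fun n0 n1 n2 a b B s θ).mulVec (stack3 x0 x1' x2'' θ)) =
      Sum.elim (0 : Fin n0 → ℝ) (Sum.elim (x1 a) (x2 a + (s - a) • x2' a)) := by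
    rw [intervalIntegral.integral_add_adjacent_intervals (iiG2 a haM s hs) (iiG2 s hs b hbM)]
    simp only [hG2eq]
    rw [intervalIntegral.integral_neg,
      ← mulVec_intervalIntegral (hIIq a haM b hbM)
        (Kmat n0 n1 n2 a s * ((B * Tmat n1 n2 a b)⁻¹ * B)), ← hIqdef, htail,
      hxbcdef, Kmat_mulVec]
  have hG5sum : (∫ θ in a..s, (G5fun n0 n1 n2 a b B s θ).mulVec (stack3 x0 x1' x2'' θ)) +
      (∫ θ in s..b, (G5fun n0 n1 n2 a b B s θ).mulVec (stack3 x0 x1' x2'' θ)) =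
      Sum.elim (0 : Fin n1 → ℝ) (x2' a) := by
    rw [intervalIntegral.integral_add_adjacent_intervals (iiG5 a haM s hs) (iiG5 s hs b hbM)]
    simp only [hG5eq]
    rw [intervalIntegral.integral_neg,
      ← mulVec_intervalIntegral (hIIq a haM b hbM)
        (Vmat n1 n2 * ((B * Tmat n1 n2 a b)⁻¹ * B)), ← hIqdef, htail,
      hxbcdef, Vmat_mulVec]
  -- L1 / L4 integrals
  have hL1int : (∫ θ in a..s, (L1mat n0 n1 n2 s θ).mulVec (stack3 x0 x1' x2'' θ)) =
      Sum.elim (0 : Fin n0 → ℝ) (Sum.elim (x1 s - x1 a)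
        (x2 s - x2 a - (s - a) • x2' a)) := by
    simp only [hL1eq]
    rw [intervalIntegral_sumElim intervalIntegrable_const (II.sumElim i1s i2ss),
      intervalIntegral_sumElim i1s i2ss]
    simp [hIx1 s hs, hIx2 s hs]
  have hL4int : (∫ θ in a..s, (L4mat n0 n1 n2).mulVec (stack3 x0 x1' x2'' θ)) =
      Sum.elim (0 : Fin n1 → ℝ) (x2' s - x2' a) := by
    simp only [hL4eq]
    rw [intervalIntegral_sumElim intervalIntegrable_const i2s]
    simp [hIx2' s hs]
  -- reconstruction identities
  have hR1 : (G0mat n0 n1 n2).mulVec (stack3 x0 x1' x2'' s) +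
      (∫ θ in a..s, (G1fun n0 n1 n2 a b B s θ).mulVec (stack3 x0 x1' x2'' θ)) +
      (∫ θ in s..b, (G2fun n0 n1 n2 a b B s θ).mulVec (stack3 x0 x1' x2'' θ)) =
      stack3 x0 x1 x2 s := by
    have hIG1 : (∫ θ in a..s, (G1fun n0 n1 n2 a b B s θ).mulVec (stack3 x0 x1' x2'' θ)) =
        (∫ θ in a..s, (L1mat n0 n1 n2 s θ).mulVec (stack3 x0 x1' x2'' θ)) +
        (∫ θ in a..s, (G2fun n0 n1 n2 a b B s θ).mulVec (stack3 x0 x1' x2'' θ)) := by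
      simp only [hG1eq]
      exact intervalIntegral.integral_add iiL1 (iiG2 a haM s hs)
    have hG0 : (G0mat n0 n1 n2).mulVec (stack3 x0 x1' x2'' s) =
        Sum.elim (x0 s) (Sum.elim (0 : Fin n1 → ℝ) (0 : Fin n2 → ℝ)) :=
      G0mat_mulVec (x0 s) (x1' s) (x2'' s)
    rw [hIG1, hL1int, hG0, add_assoc, add_assoc, hG2sum]
    funext r
    obtain (i | i | i) := r <;> simp [stack3] <;> ring
  have hR2 : (G3mat n0 n1 n2).mulVec (stack3 x0 x1' x2'' s) +
      (∫ θ in a..s, (G4fun n0 n1 n2 a b B s θ).mulVec (stack3 x0 x1' x2'' θ)) +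
      (∫ θ in s..b, (G5fun n0 n1 n2 a b B s θ).mulVec (stack3 x0 x1' x2'' θ)) =
      Sum.elim (x1' s) (x2' s) := by
    have hIG4 : (∫ θ in a..s, (G4fun n0 n1 n2 a b B s θ).mulVec (stack3 x0 x1' x2'' θ)) =
        (∫ θ in a..s, (L4mat n0 n1 n2).mulVec (stack3 x0 x1' x2'' θ)) +
        (∫ θ in a..s, (G5fun n0 n1 n2 a b B s θ).mulVec (stack3 x0 x1' x2'' θ)) := by
      simp only [hG4eq]
      exact intervalIntegral.integral_add iiL4 (iiG5 a haM s hs)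
    have hG3 : (G3mat n0 n1 n2).mulVec (stack3 x0 x1' x2'' s) =
        Sum.elim (x1' s) (0 : Fin n2 → ℝ) :=
      G3mat_mulVec (x0 s) (x1' s) (x2'' s)
    rw [hIG4, hL4int, hG3, add_assoc, add_assoc, hG5sum]
    funext r
    obtain (i | i) := r <;> simp <;> ring
  -- final assembly
  have hH0 : (H0fun n0 n1 n2 A0 A1 A2 s).mulVec (stack3 x0 x1' x2'' s) =
      (A0 s).mulVec ((G0mat n0 n1 n2).mulVec (stack3 x0 x1' x2'' s)) +
      (A1 s).mulVec ((G3mat n0 n1 n2).mulVec (stack3 x0 x1' x2'' s)) +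
      (A2 s).mulVec (x2'' s) := by
    have hA20 : (A20fun A2 s).mulVec (stack3 x0 x1' x2'' s) = (A2 s).mulVec (x2'' s) :=
      A20fun_mulVec A2 s (x0 s) (x1' s) (x2'' s)
    simp only [H0fun, Matrix.add_mulVec, ← Matrix.mulVec_mulVec, hA20]
  have hH1int : (∫ θ in a..s, (H1fun n0 n1 n2 a b B A0 A1 s θ).mulVec (stack3 x0 x1' x2'' θ)) =
      (A0 s).mulVec (∫ θ in a..s, (G1fun n0 n1 n2 a b B s θ).mulVec (stack3 x0 x1' x2'' θ)) +
      (A1 s).mulVec (∫ θ in a..s, (G4fun n0 n1 n2 a b B s θ).mulVec (stack3 x0 x1' x2'' θ)) := by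
    have h1 : ∀ θ : ℝ, (H1fun n0 n1 n2 a b B A0 A1 s θ).mulVec (stack3 x0 x1' x2'' θ) =
        (A0 s).mulVec ((G1fun n0 n1 n2 a b B s θ).mulVec (stack3 x0 x1' x2'' θ)) +
        (A1 s).mulVec ((G4fun n0 n1 n2 a b B s θ).mulVec (stack3 x0 x1' x2'' θ)) := by
      intro θ; simp only [H1fun, Matrix.add_mulVec, ← Matrix.mulVec_mulVec]
    simp only [h1]
    rw [intervalIntegral.integral_add (II.mulVec iiG1 (A0 s)) (II.mulVec iiG4 (A1 s)),
      mulVec_intervalIntegral iiG1, mulVec_intervalIntegral iiG4]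
  have hH2int : (∫ θ in s..b, (H2fun n0 n1 n2 a b B A0 A1 s θ).mulVec (stack3 x0 x1' x2'' θ)) =
      (A0 s).mulVec (∫ θ in s..b, (G2fun n0 n1 n2 a b B s θ).mulVec (stack3 x0 x1' x2'' θ)) +
      (A1 s).mulVec (∫ θ in s..b, (G5fun n0 n1 n2 a b B s θ).mulVec (stack3 x0 x1' x2'' θ)) := by
    have h1 : ∀ θ : ℝ, (H2fun n0 n1 n2 a b B A0 A1 s θ).mulVec (stack3 x0 x1' x2'' θ) =
        (A0 s).mulVec ((G2fun n0 n1 n2 a b B s θ).mulVec (stack3 x0 x1' x2'' θ)) +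
        (A1 s).mulVec ((G5fun n0 n1 n2 a b B s θ).mulVec (stack3 x0 x1' x2'' θ)) := by
      intro θ; simp only [H2fun, Matrix.add_mulVec, ← Matrix.mulVec_mulVec]
    simp only [h1]
    rw [intervalIntegral.integral_add (II.mulVec (iiG2 s hs b hbM) (A0 s))
        (II.mulVec (iiG5 s hs b hbM) (A1 s)),
      mulVec_intervalIntegral (iiG2 s hs b hbM), mulVec_intervalIntegral (iiG5 s hs b hbM)]
  simp only [Acal, PIop]
  rw [hH0, hH1int, hH2int, ← hR1, ← hR2]
  rw [Matrix.mulVec_add, Matrix.mulVec_add, Matrix.mulVec_add, Matrix.mulVec_add]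
  abel

end
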